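/- arXiv:2508.04133 — 2 statements merged into one kernel-verified Lean document; each statement's English description precedes it below -/
import Mathlib

section
/- Let A₁, …, A_d be subsets of [m], each of size ℓ, such that |A₁ ∪ ⋯ ∪ A_d| > dℓ − d/2. Then there exists an index j ∈ [d] such that A_j is disjoint from A_i for every i ≠ j. -/
theorem stmt1 (d ℓ m : ℕ) (hd : 0 < d) (hℓ : 0 < ℓ) (hm : 0 < m)
    (A : Fin d → Finset (Fin m)) (hcard : ∀ i, (A i).card = ℓ)
    (hunion : ((d : ℝ) * ℓ - d / 2) < ((Finset.univ.biUnion A).card : ℝ)) :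
    ∃ j : Fin d, ∀ i : Fin d, i ≠ j → Disjoint (A j) (A i) := by
  by_contra h
  push_neg at h
  set U := Finset.univ.biUnion A with hU
  set c : Fin m → ℕ := fun x => (Finset.univ.filter (fun i => x ∈ A i)).card with hc
  choose g hg hgd using h
  have hx : ∀ j, ∃ x, x ∈ A j ∧ x ∈ A (g j) := by
    intro j
    exact Finset.not_disjoint_iff.mp (hgd j)
  choose f hf1 hf2 using hx
  have hfU : ∀ j, f j ∈ U := fun j => Finset.mem_biUnion.2 ⟨j, Finset.mem_univ _, hf1 j⟩
  have hc2 : ∀ j, 2 ≤ c (f j) := by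
    intro j
    have hsub : ({j, g j} : Finset (Fin d)) ⊆ Finset.univ.filter (fun i => f j ∈ A i) := by
      intro i hi
      simp only [Finset.mem_insert, Finset.mem_singleton] at hi
      rcases hi with rfl | rfl <;> simp [hf1, hf2]
    have hcard2 : ({j, g j} : Finset (Fin d)).card = 2 := by
      rw [Finset.card_insert_of_notMem (by simp [Ne.symm (hg j)]), Finset.card_singleton]
    calc 2 = ({j, g j} : Finset (Fin d)).card := hcard2.symm
    _ ≤ _ := Finset.card_le_card hsub
  -- double counting
  have hAU : ∀ i, U.filter (fun x => x ∈ A i) = A i := by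
    intro i
    ext x
    simp only [Finset.mem_filter, hU, Finset.mem_biUnion, Finset.mem_univ, true_and]
    exact ⟨fun h => h.2, fun h => ⟨⟨i, h⟩, h⟩⟩
  have hsum : d * ℓ = ∑ x ∈ U, c x := by
    have h1 : ∀ i : Fin d, (A i).card = ∑ x ∈ U, if x ∈ A i then 1 else 0 := by
      intro i
      rw [← Finset.card_filter, hAU]
    calc d * ℓ = ∑ _i : Fin d, ℓ := by simp [mul_comm]
    _ = ∑ i : Fin d, (A i).card := by simp [hcard]
    _ = ∑ i : Fin d, ∑ x ∈ U, if x ∈ A i then 1 else 0 := by simp only [h1]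
    _ = ∑ x ∈ U, ∑ i : Fin d, if x ∈ A i then 1 else 0 := Finset.sum_comm
    _ = ∑ x ∈ U, c x := by
      refine Finset.sum_congr rfl fun x _ => ?_
      exact (Finset.card_filter _ _).symm
  have hc1 : ∀ x ∈ U, 1 ≤ c x := by
    intro x hxU
    rw [hU, Finset.mem_biUnion] at hxU
    obtain ⟨i, _, hi⟩ := hxU
    exact Finset.card_pos.mpr ⟨i, Finset.mem_filter.mpr ⟨Finset.mem_univ _, hi⟩⟩
  have hsplit : ∑ x ∈ U, c x = U.card + ∑ x ∈ U, (c x - 1) := by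
    rw [Finset.card_eq_sum_ones, ← Finset.sum_add_distrib]
    apply Finset.sum_congr rfl
    intro x hxU
    have := hc1 x hxU
    omega
  -- fiber counting
  have hfib : d = ∑ x ∈ U, (Finset.univ.filter (fun j => f j = x)).card := by
    have h := Finset.card_eq_sum_card_fiberwise
      (fun j (_ : j ∈ (Finset.univ : Finset (Fin d))) => hfU j)
    simpa using h
  have hfible : ∀ x ∈ U, (Finset.univ.filter (fun j => f j = x)).card ≤ 2 * (c x - 1) := by
    intro x hxU
    rcases Finset.eq_empty_or_nonempty (Finset.univ.filter (fun j => f j = x)) with he | ⟨j, hj⟩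
    · rw [he]; simp
    · simp only [Finset.mem_filter] at hj
      have hx2 : 2 ≤ c x := hj.2 ▸ hc2 j
      have hsub : Finset.univ.filter (fun j => f j = x) ⊆
          Finset.univ.filter (fun i => x ∈ A i) := by
        intro i hi
        simp only [Finset.mem_filter] at hi ⊢
        exact ⟨hi.1, hi.2 ▸ hf1 i⟩
      have hle := Finset.card_le_card hsub
      have hcc : (Finset.filter (fun i => x ∈ A i) Finset.univ).card = c x := rfl
      omega
  have hd2S : d ≤ 2 * ∑ x ∈ U, (c x - 1) := by
    rw [hfib, Finset.mul_sum]
    exact Finset.sum_le_sum hfible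
  -- conclude
  have hkey : d * ℓ = U.card + ∑ x ∈ U, (c x - 1) := hsum.trans hsplit
  set S := ∑ x ∈ U, (c x - 1)
  have h1 : ((d : ℝ) * ℓ) = (U.card : ℝ) + S := by exact_mod_cast congrArg (Nat.cast : ℕ → ℝ) hkey
  have h2 : (d : ℝ) ≤ 2 * S := by exact_mod_cast hd2S
  linarith
end

section
/- Let A₁, …, A_d ∈ ([m] choose ℓ) with |A₁ ∪ ⋯ ∪ A_d| = dℓ − a and dℓ < m. Then |binom(A₁,2) ∪ ⋯ ∪ binom(A_d,2)| ≥ d·C(ℓ,2) − min{(a/ℓ)·C(ℓ,2), C(a,2)}, where binom(A,2) denotes the set of unordered pairs of distinct elements of A and C(x,2) = x(x−1)/2. -/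
open Finset

lemma aux_two_mul_choose_two (n : ℕ) : 2 * n.choose 2 = n * (n - 1) := by
  induction n with
  | zero => simp
  | succ k ih =>
    rw [Nat.choose_succ_succ, Nat.mul_add, ih]
    cases k with
    | zero => simp
    | succ j => simp [Nat.choose_one_right]; ring

lemma aux_choose_two_add (x y : ℕ) : x.choose 2 + y.choose 2 ≤ (x + y).choose 2 := by
  have h : 2 * (x.choose 2 + y.choose 2) ≤ 2 * ((x + y).choose 2) := by
    rw [Nat.mul_add, aux_two_mul_choose_two, aux_two_mul_choose_two,
      aux_two_mul_choose_two]
    rcases Nat.eq_zero_or_pos x with hx | hx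
    · simp [hx]
    rcases Nat.eq_zero_or_pos y with hy | hy
    · simp [hy]
    have h1 : x - 1 + 1 = x := Nat.succ_pred_eq_of_pos hx
    have h2 : y - 1 + 1 = y := Nat.succ_pred_eq_of_pos hy
    have h3 : x + y - 1 = (x - 1) + y := by omega
    nlinarith [Nat.sub_le x 1, Nat.sub_le y 1]
  omega

lemma aux_union_card {α : Type*} [DecidableEq α] (B : ℕ → Finset α) (n : ℕ) :
    ((Finset.range n).biUnion B).card
      + ∑ j ∈ Finset.range n, (B j ∩ (Finset.range j).biUnion B).card
      = ∑ j ∈ Finset.range n, (B j).card := by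
  induction n with
  | zero => simp
  | succ k ih =>
    rw [Finset.range_add_one, Finset.biUnion_insert,
      Finset.sum_insert (Finset.notMem_range_self),
      Finset.sum_insert (Finset.notMem_range_self)]
    have key := Finset.card_union_add_card_inter (B k) ((Finset.range k).biUnion B)
    omega

lemma aux_pairs_card {α : Type*} [DecidableEq α] (B : ℕ → Finset α) (n : ℕ) :
    ∑ j ∈ Finset.range n, ((B j).card).choose 2
      ≤ ((Finset.range n).biUnion (fun j => (B j).powersetCard 2)).card
        + ∑ j ∈ Finset.range n, ((B j ∩ (Finset.range j).biUnion B).card).choose 2 := by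
  induction n with
  | zero => simp
  | succ k ih =>
    rw [Finset.range_add_one, Finset.biUnion_insert,
      Finset.sum_insert (Finset.notMem_range_self),
      Finset.sum_insert (Finset.notMem_range_self)]
    have key := Finset.card_union_add_card_inter ((B k).powersetCard 2)
      ((Finset.range k).biUnion (fun j => (B j).powersetCard 2))
    have hsub : (B k).powersetCard 2 ∩
        ((Finset.range k).biUnion (fun j => (B j).powersetCard 2))
        ⊆ (B k ∩ (Finset.range k).biUnion B).powersetCard 2 := by
      intro p hp
      simp only [Finset.mem_inter, Finset.mem_powersetCard, Finset.mem_biUnion] at hp ⊢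
      obtain ⟨⟨hpk, hp2⟩, j, hj, hpj, _⟩ := hp
      refine ⟨Finset.subset_inter hpk ?_, hp2⟩
      exact hpj.trans (Finset.subset_biUnion_of_mem B hj)
    have hle : ((B k).powersetCard 2 ∩
        ((Finset.range k).biUnion (fun j => (B j).powersetCard 2))).card
        ≤ ((B k ∩ (Finset.range k).biUnion B).card).choose 2 := by
      calc _ ≤ ((B k ∩ (Finset.range k).biUnion B).powersetCard 2).card :=
            Finset.card_le_card hsub
        _ = _ := Finset.card_powersetCard 2 _
    have hpc : ((B k).powersetCard 2).card = ((B k).card).choose 2 :=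
      Finset.card_powersetCard 2 _
    omega

theorem stmt2 (d ℓ m a : ℕ) (hℓpos : 0 < ℓ)
    (A : Fin d → Finset (Fin m)) (hcard : ∀ i, (A i).card = ℓ)
    (hdm : d * ℓ < m) (ha : a ≤ d * ℓ)
    (hunion : (Finset.univ.biUnion A).card = d * ℓ - a) :
    (d : ℝ) * (ℓ.choose 2) -
      min ((a / ℓ : ℝ) * (ℓ.choose 2)) ((a.choose 2 : ℝ)) ≤
    ((Finset.univ.biUnion fun i => (A i).powersetCard 2).card : ℝ) := by
  classical
  set B : ℕ → Finset (Fin m) := fun j => if h : j < d then A ⟨j, h⟩ else ∅ with hB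
  have hBcard : ∀ j ∈ Finset.range d, (B j).card = ℓ := by
    intro j hj
    rw [Finset.mem_range] at hj
    simp [hB, hj, hcard]
  -- identify unions
  have hU : Finset.univ.biUnion A = (Finset.range d).biUnion B := by
    ext x
    simp only [Finset.mem_biUnion, Finset.mem_univ, Finset.mem_range, true_and]
    constructor
    · rintro ⟨i, hi⟩
      exact ⟨i.val, i.isLt, by simp [hB, i.isLt, hi]⟩
    · rintro ⟨j, hj, hx⟩
      exact ⟨⟨j, hj⟩, by simpa [hB, hj] using hx⟩
  have hP : (Finset.univ.biUnion fun i => (A i).powersetCard 2)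
      = (Finset.range d).biUnion (fun j => (B j).powersetCard 2) := by
    ext p
    simp only [Finset.mem_biUnion, Finset.mem_univ, Finset.mem_range, true_and]
    constructor
    · rintro ⟨i, hi⟩
      exact ⟨i.val, i.isLt, by simp [hB, i.isLt, hi]⟩
    · rintro ⟨j, hj, hx⟩
      exact ⟨⟨j, hj⟩, by simpa [hB, hj] using hx⟩
  set b : ℕ → ℕ := fun j => (B j ∩ (Finset.range j).biUnion B).card with hb
  have hbℓ : ∀ j ∈ Finset.range d, b j ≤ ℓ := by
    intro j hj
    calc b j ≤ (B j).card := Finset.card_le_card (Finset.inter_subset_left)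
      _ = ℓ := hBcard j hj
  -- sum of b = a
  have hsum : ∑ j ∈ Finset.range d, b j = a := by
    simp only [hb]
    have h1 := aux_union_card B d
    rw [Finset.sum_congr rfl hBcard, Finset.sum_const, Finset.card_range,
      smul_eq_mul] at h1
    rw [hU] at hunion
    omega
  -- main counting inequality
  have hmain : d * ℓ.choose 2 ≤
      ((Finset.range d).biUnion (fun j => (B j).powersetCard 2)).card
        + ∑ j ∈ Finset.range d, (b j).choose 2 := by
    have h2 := aux_pairs_card B d
    calc d * ℓ.choose 2 = ∑ j ∈ Finset.range d, ((B j).card).choose 2 := by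
          rw [Finset.sum_congr rfl (fun j hj => by rw [hBcard j hj]),
            Finset.sum_const, Finset.card_range, smul_eq_mul]
      _ ≤ _ := h2
  -- superadditivity bound
  have hT1 : ∑ j ∈ Finset.range d, (b j).choose 2 ≤ a.choose 2 := by
    rw [← hsum]
    induction (Finset.range d) using Finset.induction with
    | empty => simp
    | insert _ _ hx ih =>
      rw [Finset.sum_insert hx, Finset.sum_insert hx]
      exact le_trans (Nat.add_le_add_left ih _) (aux_choose_two_add _ _)
  -- linear bound
  have hT2 : 2 * ∑ j ∈ Finset.range d, (b j).choose 2 ≤ a * (ℓ - 1) := by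
    rw [← hsum, Finset.mul_sum, Finset.sum_mul]
    apply Finset.sum_le_sum
    intro j hj
    rw [aux_two_mul_choose_two]
    exact Nat.mul_le_mul_left _ (by have := hbℓ j hj; omega)
  -- pass to the reals
  set T : ℕ := ∑ j ∈ Finset.range d, (b j).choose 2 with hT
  rw [hP]
  have hmainR : (d : ℝ) * ℓ.choose 2 ≤
      (((Finset.range d).biUnion (fun j => (B j).powersetCard 2)).card : ℝ) + T := by
    exact_mod_cast hmain
  have hminR : (T : ℝ) ≤ min ((a / ℓ : ℝ) * (ℓ.choose 2)) ((a.choose 2 : ℝ)) := by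
    apply le_min
    · have hc : (ℓ.choose 2 : ℝ) = (ℓ : ℝ) * ((ℓ : ℝ) - 1) / 2 := by
        have h := aux_two_mul_choose_two ℓ
        have h2 : ((2 * ℓ.choose 2 : ℕ) : ℝ) = ((ℓ * (ℓ - 1) : ℕ) : ℝ) := by
          exact_mod_cast congrArg (Nat.cast (R := ℝ)) h
        push_cast [Nat.cast_sub hℓpos] at h2
        linarith
      have hℓne : (ℓ : ℝ) ≠ 0 := by positivity
      have h2T : (2 : ℝ) * T ≤ (a : ℝ) * ((ℓ : ℝ) - 1) := by
        have h3 : ((2 * T : ℕ) : ℝ) ≤ ((a * (ℓ - 1) : ℕ) : ℝ) := by exact_mod_cast hT2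
        push_cast [Nat.cast_sub hℓpos] at h3
        linarith
      have heq : (a / ℓ : ℝ) * ((ℓ : ℝ) * ((ℓ : ℝ) - 1) / 2)
          = (a : ℝ) * ((ℓ : ℝ) - 1) / 2 := by
        field_simp
      rw [hc, heq]
      linarith
    · exact_mod_cast hT1
  linarith
end
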